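/- Let (X,T) be a dynamical system and E a Δ-weakly mixing subset of X. For every ε > 0 and d ∈ ℕ, the collection X(ε,d,E) of closed subsets of X that are (ε,d)-spread in E is open in the hyperspace 2^X, and X(ε,d,E) ∩ 2^E is dense in 2^E. Consequently X(E) := ⋂_{d,k ≥ 1} X(1/k, d, E) intersected with 2^E is a residual subset of 2^E. -/

import Mathlib

open TopologicalSpace

/-- `A` is `(ε,d)`-spread in `E`. -/
def Spread {X : Type*} [MetricSpace X] (T : X → X) (ε : ℝ) (d : ℕ) (A E : Set X) : Prop :=
  ∃ δ : ℝ, 0 < δ ∧ δ < ε ∧ ∃ n : ℕ, ∃ z : Fin n → X, Function.Injective z ∧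
    A ⊆ ⋃ i, Metric.ball (z i) δ ∧
    ∀ g : Fin d → Fin n → X, (∀ j i, g j i ∈ E) →
      ∃ k : ℕ, 1 ≤ k ∧ 1 / (k : ℝ) < ε ∧
        ∀ i : Fin n, ∀ j : Fin d,
          T^[(j.val + 1) * k] '' Metric.ball (z i) δ ⊆ Metric.ball (g j i) ε

/-- `E` is a Δ-weakly mixing set for `T`. -/
def DeltaWM {X : Type*} [TopologicalSpace X] (T : X → X) (A : Set X) : Prop :=
  A.Nontrivial ∧ ∀ n d : ℕ, 2 ≤ n → 2 ≤ d → ∀ U : Fin n → Fin d → Set X,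
    (∀ i j, IsOpen (U i j)) → (∀ i j, (U i j ∩ A).Nonempty) →
    ∃ m : ℕ, 1 ≤ m ∧ ∀ i : Fin n, ∃ x ∈ A, ∀ j : Fin d, T^[j.val * m] x ∈ U i j

open Metric Set

lemma auxMin {α : Type*} [Fintype α] (f : α → ℝ) (hf : ∀ a, 0 < f a) {c : ℝ} (hc : 0 < c) :
    ∃ r : ℝ, 0 < r ∧ r ≤ c ∧ ∀ a, r ≤ f a := by
  classical
  set g : Option α → ℝ := fun o => o.elim c f with hg
  refine ⟨Finset.univ.inf' Finset.univ_nonempty g, ?_, ?_, ?_⟩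
  · rw [Finset.lt_inf'_iff]
    rintro (_|a) _
    · exact hc
    · exact hf a
  · exact Finset.inf'_le g (Finset.mem_univ none)
  · exact fun a => Finset.inf'_le g (Finset.mem_univ (some a))

lemma auxUnique {d j j' a b : ℕ} (hj : j < d) (hj' : j' < d)
    (h : (j + 1) * (d + 1) ^ a = (j' + 1) * (d + 1) ^ b) : j = j' ∧ a = b := by
  have key : ∀ {u u' x y : ℕ}, u < d → u' < d → x ≤ y →
      (u + 1) * (d + 1) ^ x = (u' + 1) * (d + 1) ^ y → u = u' ∧ x = y := by
    intro u u' x y hu hu' hxy heq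
    have hy : y = (y - x) + x := by omega
    rw [hy, pow_add, ← mul_assoc] at heq
    have hpos : 0 < (d + 1) ^ x := Nat.pow_pos (by omega)
    have h2 : u + 1 = (u' + 1) * (d + 1) ^ (y - x) := Nat.eq_of_mul_eq_mul_right hpos heq
    rcases Nat.eq_zero_or_pos (y - x) with h0 | h0
    · rw [h0, pow_zero, mul_one] at h2
      omega
    · exfalso
      have : (d + 1) ^ 1 ≤ (d + 1) ^ (y - x) := Nat.pow_le_pow_right (by omega) h0
      rw [pow_one] at this
      nlinarith
  rcases le_total a b with hab | hab
  · exact key hj hj' hab h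
  · obtain ⟨e1, e2⟩ := key hj' hj hab h.symm
    exact ⟨e1.symm, e2.symm⟩

lemma keyDense {X : Type*} [MetricSpace X] [CompactSpace X] (T : X → X)
    (hT : Continuous T) (E : Set X) (hE : IsClosed E) (hwm : DeltaWM T E)
    {ε : ℝ} (hε : 0 < ε) (d : ℕ) (F : NonemptyCompacts X) (hFE : (F : Set X) ⊆ E)
    {η : ℝ} (hη : 0 < η) :
    ∃ F' : NonemptyCompacts X, (F' : Set X) ⊆ E ∧ Spread T ε d (F' : Set X) E ∧
      hausdorffDist (F' : Set X) (F : Set X) < η := by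
  classical
  obtain ⟨e0, he0, -⟩ := hwm.1
  -- finite net of F
  obtain ⟨t, htF, hcovF⟩ := F.isCompact.elim_nhds_subcover (fun p => ball p (η / 3))
    (fun p _ => ball_mem_nhds p (by positivity))
  set n := t.card with hn
  set y : Fin n → X := fun i => ((t.equivFin.symm i : t) : X) with hy
  have hyinj : Function.Injective y := fun i i' h => by
    have := Subtype.ext h (p := (· ∈ t))
    exact t.equivFin.symm.injective this
  have hyF : ∀ i, y i ∈ (F : Set X) := fun i => htF _ (t.equivFin.symm i).2
  have hn1 : 0 < n := by
    rcases F.nonempty with ⟨p, hp⟩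
    rcases mem_iUnion₂.1 (hcovF hp) with ⟨q, hq, -⟩
    exact Finset.card_pos.2 ⟨q, hq⟩
  -- finite net of E
  obtain ⟨tE, htE, hcovE⟩ := (hE.isCompact).elim_nhds_subcover (fun p => ball p (ε / 3))
    (fun p _ => ball_mem_nhds p (by positivity))
  -- separation radius
  obtain ⟨r0, hr0, hr0η, hr0sep⟩ := auxMin (α := {p : Fin n × Fin n // p.1 ≠ p.2})
    (fun p => dist (y p.1.1) (y p.1.2) / 2)
    (fun p => by
      have : y p.1.1 ≠ y p.1.2 := fun h => p.2 (hyinj h)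
      have := dist_pos.2 this
      linarith)
    (c := η / 3) (by positivity)
  -- multipliers
  set G := Fin d → Fin n → {p // p ∈ tE} with hG
  set N := Fintype.card G with hN
  set eqG := (Fintype.equivFin G) with heqG
  set L : ℕ := ⌈1 / ε⌉₊ + 1 with hL
  have hL1 : 1 ≤ L := by omega
  set M : G → ℕ := fun h => L * (d + 1) ^ ((eqG h).val) with hM
  have hM1 : ∀ h, 1 ≤ M h := fun h => Nat.one_le_iff_ne_zero.2 (by positivity)
  have hMuniq : ∀ (h h' : G) (j j' : Fin d), (j.val + 1) * M h = (j'.val + 1) * M h' →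
      j = j' ∧ h = h' := by
    intro h h' j j' heq
    rw [hM] at heq
    simp only at heq
    rw [← mul_assoc, ← mul_assoc, mul_comm (j.val + 1) L, mul_comm (j'.val + 1) L,
      mul_assoc, mul_assoc] at heq
    have heq2 : (j.val + 1) * (d + 1) ^ ((eqG h).val) =
        (j'.val + 1) * (d + 1) ^ ((eqG h').val) :=
      Nat.eq_of_mul_eq_mul_left (by omega) heq
    obtain ⟨e1, e2⟩ := auxUnique j.isLt j'.isLt heq2
    exact ⟨Fin.ext e1, eqG.injective (Fin.ext e2)⟩
  set D : ℕ := d * L * (d + 1) ^ N + 2 with hD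
  have hMlt : ∀ (h : G) (j : Fin d), (j.val + 1) * M h < D := by
    intro h j
    have h1 : (j.val + 1) ≤ d := j.isLt
    have h2 : (d + 1) ^ ((eqG h).val) ≤ (d + 1) ^ N :=
      Nat.pow_le_pow_right (by omega) (le_of_lt (eqG h).isLt)
    calc (j.val + 1) * M h ≤ d * (L * (d + 1) ^ N) :=
          Nat.mul_le_mul h1 (Nat.mul_le_mul_left L h2)
      _ < D := by rw [hD, ← mul_assoc]; omega
  -- extended point functions
  set y' : Fin (n + 2) → X := fun i => if hi : (i : ℕ) < n then y ⟨i, hi⟩ else e0 with hy'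
  set hpt : G → Fin d → Fin (n + 2) → X :=
    fun h j i => if hi : (i : ℕ) < n then (h j ⟨i, hi⟩ : X) else e0 with hhpt
  have hy'E : ∀ i, y' i ∈ E := by
    intro i; rw [hy']; dsimp only; split
    · exact hFE (hyF _)
    · exact he0
  have hptE : ∀ h j i, hpt h j i ∈ E := by
    intro h j i; rw [hhpt]; dsimp only; split
    · exact htE _ (Subtype.coe_prop _)
    · exact he0
  have hy'eq : ∀ i : Fin n, y' ⟨i.1, by omega⟩ = y i := fun i => dif_pos i.isLt
  have hpteq : ∀ (h : G) (j : Fin d) (i : Fin n), hpt h j ⟨i.1, by omega⟩ = (h j i : X) :=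
    fun h j i => dif_pos i.isLt
  -- the open sets
  set U : Fin (n + 2) → Fin D → Set X := fun i c =>
    (if (c : ℕ) = 0 then ball (y' i) r0 else univ) ∩
      ⋂ h : G, ⋂ j : Fin d,
        (if (j.val + 1) * M h = (c : ℕ) then ball (hpt h j i) (ε / 3) else univ) with hU
  have hUopen : ∀ i c, IsOpen (U i c) := by
    intro i c
    refine IsOpen.inter ?_ (isOpen_iInter_of_finite fun h =>
      isOpen_iInter_of_finite fun j => ?_)
    · split <;> [exact isOpen_ball; exact isOpen_univ]
    · split <;> [exact isOpen_ball; exact isOpen_univ]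
  have hUne : ∀ i c, (U i c ∩ E).Nonempty := by
    intro i c
    by_cases hc0 : (c : ℕ) = 0
    · refine ⟨y' i, ⟨?_, ?_⟩, hy'E i⟩
      · rw [if_pos hc0]; exact mem_ball_self hr0
      · refine mem_iInter.2 fun h => mem_iInter.2 fun j => ?_
        split
        next hcond => exfalso; have := hM1 h; nlinarith [hcond]
        next => exact mem_univ _
    · by_cases hex : ∃ (h : G) (j : Fin d), (j.val + 1) * M h = (c : ℕ)
      · obtain ⟨h0, j0, hh⟩ := hex
        refine ⟨hpt h0 j0 i, ⟨?_, ?_⟩, hptE h0 j0 i⟩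
        · rw [if_neg hc0]; exact mem_univ _
        · refine mem_iInter.2 fun h => mem_iInter.2 fun j => ?_
          split
          next hcond =>
            obtain ⟨ej, eh⟩ := hMuniq h h0 j j0 (hcond.trans hh.symm)
            subst ej; subst eh
            exact mem_ball_self (by positivity)
          next => exact mem_univ _
      · push_neg at hex
        refine ⟨e0, ⟨?_, ?_⟩, he0⟩
        · rw [if_neg hc0]; exact mem_univ _
        · refine mem_iInter.2 fun h => mem_iInter.2 fun j => ?_
          rw [if_neg (hex h j)]; exact mem_univ _
  obtain ⟨m, hm1, hmem⟩ := hwm.2 (n + 2) D (by omega) (by omega) U hUopen hUne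
  choose x hxE hx using fun i : Fin n => hmem ⟨i.1, by omega⟩
  -- extraction
  have hx0 : ∀ i : Fin n, x i ∈ ball (y i) r0 := by
    intro i
    have h1 := (hx i ⟨0, by omega⟩).1
    rw [if_pos rfl] at h1
    simp only [Nat.zero_mul, Function.iterate_zero, id] at h1
    rw [← hy'eq i]
    exact h1
  have hxball : ∀ (h : G) (j : Fin d) (i : Fin n),
      T^[((j.val + 1) * M h) * m] (x i) ∈ ball ((h j i : X)) (ε / 3) := by
    intro h j i
    have h1 := (hx i ⟨(j.val + 1) * M h, hMlt h j⟩).2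
    have h3 := mem_iInter.1 (mem_iInter.1 h1 h) j
    rw [if_pos rfl] at h3
    rw [← hpteq h j i]
    exact h3
  -- injectivity of x
  have hxinj : Function.Injective x := by
    intro i i' hii
    by_contra hne
    have hsep := hr0sep ⟨(i, i'), hne⟩
    have d1 := hx0 i
    have d2 := hx0 i'
    rw [mem_ball] at d1 d2
    have : dist (y i) (y i') ≤ dist (y i) (x i) + dist (x i') (y i') := by
      rw [hii]; exact dist_triangle _ _ _
    rw [dist_comm (y i) (x i)] at this
    simp only at hsep
    linarith
  -- continuity: choose δ
  have hcont : ∀ p : G × Fin d × Fin n, ∃ δ : ℝ, 0 < δ ∧ ∀ w,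
      dist w (x p.2.2) < δ →
        dist (T^[((p.2.1.val + 1) * M p.1) * m] w) ((p.1 p.2.1 p.2.2 : X)) < ε / 2 := by
    rintro ⟨h, j, i⟩
    have hc : Continuous (T^[((j.val + 1) * M h) * m]) := hT.iterate _
    obtain ⟨δ, hδ, hδ2⟩ := Metric.continuous_iff.1 hc (x i) (ε / 6) (by positivity)
    refine ⟨δ, hδ, fun w hw => ?_⟩
    have h1 := hδ2 w hw
    have h2 := hxball h j i
    rw [mem_ball] at h2
    calc dist (T^[((j.val + 1) * M h) * m] w) ((h j i : X))
        ≤ dist (T^[((j.val + 1) * M h) * m] w) (T^[((j.val + 1) * M h) * m] (x i)) +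
          dist (T^[((j.val + 1) * M h) * m] (x i)) ((h j i : X)) := dist_triangle _ _ _
      _ < ε / 6 + ε / 3 := add_lt_add h1 h2
      _ = ε / 2 := by ring
  choose δf hδfpos hδf using hcont
  obtain ⟨δ, hδ, hδε, hδle⟩ := auxMin δf hδfpos (c := ε / 2) (by positivity)
  -- the new compact set
  have hrange : (Set.range x).Nonempty := by
    have : Nonempty (Fin n) := ⟨⟨0, hn1⟩⟩
    exact Set.range_nonempty x
  refine ⟨⟨⟨Set.range x, (Set.finite_range x).isCompact⟩, hrange⟩, ?_, ?_, ?_⟩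
  · rintro _ ⟨i, rfl⟩
    exact hxE i
  · -- Spread
    refine ⟨δ, hδ, lt_of_le_of_lt hδε (by linarith), n, x, hxinj, ?_, ?_⟩
    · rintro _ ⟨i, rfl⟩
      exact mem_iUnion.2 ⟨i, mem_ball_self hδ⟩
    · intro g hg
      -- approximate g by a net function
      have happ : ∀ (j : Fin d) (i : Fin n), ∃ p : {p // p ∈ tE},
          dist (g j i) (p : X) < ε / 3 := by
        intro j i
        rcases mem_iUnion₂.1 (hcovE (hg j i)) with ⟨q, hq, hball⟩
        exact ⟨⟨q, hq⟩, mem_ball.1 hball⟩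
      choose hfun hdist using happ
      refine ⟨M hfun * m, Nat.one_le_iff_ne_zero.2 (by positivity), ?_, ?_⟩
      · -- 1 / k < ε
        have hLε : 1 / ε < (L : ℝ) := by
          rw [hL]
          push_cast
          exact lt_of_le_of_lt (Nat.le_ceil _) (by linarith)
        have hLk : (L : ℝ) ≤ ((M hfun * m : ℕ) : ℝ) := by
          have : L ≤ M hfun * m := by
            calc L ≤ M hfun := Nat.le_mul_of_pos_right _ (by positivity)
              _ ≤ M hfun * m := Nat.le_mul_of_pos_right _ (by omega)
          exact_mod_cast this
        have hLpos : (0 : ℝ) < L := by positivity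
        have h1 : 1 / (L : ℝ) < ε := by
          rw [div_lt_iff₀ hLpos]
          rw [div_lt_iff₀ hε] at hLε
          nlinarith
        calc 1 / ((M hfun * m : ℕ) : ℝ) ≤ 1 / (L : ℝ) :=
              one_div_le_one_div_of_le hLpos hLk
          _ < ε := h1
      · intro i j
        rintro _ ⟨w, hw, rfl⟩
        have hwx : dist w (x i) < δf (hfun, j, i) :=
          lt_of_lt_of_le (mem_ball.1 hw) (hδle _)
        have h1 := hδf (hfun, j, i) w hwx
        rw [mem_ball]
        have h2 : (j.val + 1) * (M hfun * m) = ((j.val + 1) * M hfun) * m := by ring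
        rw [h2]
        calc dist (T^[((j.val + 1) * M hfun) * m] w) (g j i)
            ≤ dist (T^[((j.val + 1) * M hfun) * m] w) ((hfun j i : X)) +
              dist ((hfun j i : X)) (g j i) := dist_triangle _ _ _
          _ < ε / 2 + ε / 3 := add_lt_add h1 (by rw [dist_comm]; exact hdist j i)
          _ < ε := by linarith
  · -- Hausdorff distance
    have hne1 : hausdorffDist (Set.range x) (F : Set X) ≤ 2 * η / 3 := by
      apply hausdorffDist_le_of_mem_dist (by positivity)
      · rintro _ ⟨i, rfl⟩
        refine ⟨y i, hyF i, ?_⟩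
        have := mem_ball.1 (hx0 i)
        linarith
      · intro b hb
        rcases mem_iUnion₂.1 (hcovF hb) with ⟨q, hq, hball⟩
        set i := t.equivFin ⟨q, hq⟩ with hi
        have hyq : y i = q := by
          rw [hy, hi]
          simp
        refine ⟨x i, ⟨i, rfl⟩, ?_⟩
        have h1 : dist b (y i) < η / 3 := by rw [hyq]; exact mem_ball.1 hball
        have h2 : dist (y i) (x i) < η / 3 := by
          have := mem_ball.1 (hx0 i); rw [dist_comm]; linarith
        calc dist b (x i) ≤ dist b (y i) + dist (y i) (x i) := dist_triangle _ _ _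
          _ ≤ 2 * η / 3 := by linarith
    calc hausdorffDist (Set.range x) (F : Set X) ≤ 2 * η / 3 := hne1
      _ < η := by linarith


lemma keyOpen {X : Type*} [MetricSpace X] [CompactSpace X] (T : X → X) (ε : ℝ) (d : ℕ)
    (E : Set X) : IsOpen {F : NonemptyCompacts X | Spread T ε d (F : Set X) E} := by
  rw [Metric.isOpen_iff]
  rintro F ⟨δ, hδ, hδε, n, z, hzinj, hcov, hg⟩
  obtain ⟨r, hr, hrsub⟩ := F.isCompact.exists_thickening_subset_open
    (isOpen_iUnion fun i => isOpen_ball) hcov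
  refine ⟨r, hr, fun F' hF' => ⟨δ, hδ, hδε, n, z, hzinj, fun p hp => ?_, hg⟩⟩
  apply hrsub
  rw [mem_thickening_iff_infDist_lt F.nonempty]
  have hfin : EMetric.hausdorffEdist (F' : Set X) (F : Set X) ≠ ⊤ :=
    hausdorffEdist_ne_top_of_nonempty_of_bounded F'.nonempty F.nonempty
      F'.isCompact.isBounded F.isCompact.isBounded
  have h1 := infDist_le_hausdorffDist_of_mem hp hfin
  have h2 : hausdorffDist (F' : Set X) (F : Set X) = dist F' F :=
    (NonemptyCompacts.dist_eq).symm
  have h3 : dist F' F < r := mem_ball.1 hF'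
  linarith


theorem stmt9 {X : Type*} [MetricSpace X] [CompactSpace X] (T : X → X)
    (hT : Continuous T) (E : Set X) (hE : IsClosed E) (hwm : DeltaWM T E) :
    (∀ ε : ℝ, 0 < ε → ∀ d : ℕ,
      IsOpen {F : NonemptyCompacts X | Spread T ε d (F : Set X) E} ∧
      Dense {F : {F : NonemptyCompacts X // (F : Set X) ⊆ E} |
        Spread T ε d (F.1 : Set X) E}) ∧
    {F : {F : NonemptyCompacts X // (F : Set X) ⊆ E} |
        ∀ d k : ℕ, 1 ≤ k → Spread T (1 / (k : ℝ)) d (F.1 : Set X) E} ∈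
      residual {F : NonemptyCompacts X // (F : Set X) ⊆ E} := by
  classical
  have hdense : ∀ ε : ℝ, 0 < ε → ∀ d : ℕ,
      Dense {F : {F : NonemptyCompacts X // (F : Set X) ⊆ E} |
        Spread T ε d (F.1 : Set X) E} := by
    intro ε hε d
    rw [Metric.dense_iff]
    rintro ⟨F, hFE⟩ r hr
    obtain ⟨F', hF'E, hF'spread, hF'dist⟩ := keyDense T hT E hE hwm hε d F hFE hr
    refine ⟨⟨F', hF'E⟩, ?_, hF'spread⟩
    rw [mem_ball, Subtype.dist_eq, NonemptyCompacts.dist_eq]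
    exact hF'dist
  refine ⟨fun ε hε d => ⟨keyOpen T ε d E, hdense ε hε d⟩, ?_⟩
  have heq : {F : {F : NonemptyCompacts X // (F : Set X) ⊆ E} |
        ∀ d k : ℕ, 1 ≤ k → Spread T (1 / (k : ℝ)) d (F.1 : Set X) E} =
      ⋂ (d : ℕ), ⋂ (k : ℕ), {F : {F : NonemptyCompacts X // (F : Set X) ⊆ E} |
        1 ≤ k → Spread T (1 / (k : ℝ)) d (F.1 : Set X) E} := by
    ext F
    simp only [Set.mem_setOf_eq, Set.mem_iInter]
  rw [heq]
  rw [countable_iInter_mem]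
  intro d
  rw [countable_iInter_mem]
  intro k
  rcases Nat.eq_zero_or_pos k with hk | hk
  · have : {F : {F : NonemptyCompacts X // (F : Set X) ⊆ E} |
        1 ≤ k → Spread T (1 / (k : ℝ)) d (F.1 : Set X) E} = Set.univ := by
      ext F; simp [hk]
    rw [this]
    exact Filter.univ_mem
  · have hkε : (0 : ℝ) < 1 / (k : ℝ) := by positivity
    refine Filter.mem_of_superset (residual_of_dense_open ?_ (hdense _ hkε d)) ?_
    · exact (keyOpen T (1 / (k : ℝ)) d E).preimage continuous_subtype_val
    · intro F hF _
      exact hF
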